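/- Let X be a (75,32,10,16) strongly regular graph with a 4-clique K whose outside-degree distribution is (1,26,42,2) with b_4=0; let x0 be the unique vertex with 0 neighbors in K and x1, x2 the two (non-adjacent) vertices with 3 neighbors in K, both adjacent to x0. Then each of x1, x2 has exactly 19 neighbors among the vertices with 1 neighbor in K and exactly 9 neighbors among the vertices with 2 neighbors in K. Moreover the number of vertices with 1 neighbor in K adjacent to both x1 and x2 is 12 or 13. -/
import Mathlib


open Finset

/-- The number of neighbors of `x` inside the vertex set `K`. -/
def nbrs {V : Type*} [DecidableEq V] (G : SimpleGraph V) [DecidableRel G.Adj]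
    (K : Finset V) (x : V) : ℕ :=
  (K.filter (fun y => G.Adj x y)).card

/-- The number of vertices outside `K` with exactly `i` neighbors in `K`. -/
def bcount {V : Type*} [Fintype V] [DecidableEq V] (G : SimpleGraph V) [DecidableRel G.Adj]
    (K : Finset V) (i : ℕ) : ℕ :=
  ((univ \ K).filter (fun x => nbrs G K x = i)).card


set_option linter.unusedSectionVars false

section helpers

variable {V : Type*} [Fintype V] [DecidableEq V] (G : SimpleGraph V) [DecidableRel G.Adj]

/-- common neighbor count as a filter card -/
lemma common_card (v w : V) :
    (univ.filter fun y => G.Adj v y ∧ G.Adj w y).card = Fintype.card (G.commonNeighbors v w) := by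
  rw [← Set.toFinset_card]
  congr 1
  ext y
  simp [SimpleGraph.mem_commonNeighbors]

lemma split_card (K : Finset V) (p : V → Prop) [DecidablePred p] :
    (univ.filter p).card = (K.filter p).card + ((univ \ K).filter p).card := by
  rw [← card_filter_add_card_filter_not (s := univ.filter p) (p := (· ∈ K))]
  congr 1
  · congr 1; ext y; simp [and_comm]
  · congr 1; ext y; simp [and_comm]

def fib (K : Finset V) (T : Finset V) (i : ℕ) : ℕ := (T.filter (fun y => nbrs G K y = i)).card

lemma nbrs_le (K : Finset V) (y : V) : nbrs G K y ≤ K.card := card_filter_le _ _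

lemma card_fiber_sum (K : Finset V) (hK4 : K.card = 4) (T : Finset V) :
    T.card = fib G K T 0 + fib G K T 1 + fib G K T 2 + fib G K T 3 + fib G K T 4 := by
  have h := card_eq_sum_card_fiberwise (f := nbrs G K) (s := T) (t := range 5)
    (fun y _ => mem_range.mpr (by have := nbrs_le G K y; omega))
  rw [h]
  simp [sum_range_succ, fib]

lemma sum_fiber (K : Finset V) (hK4 : K.card = 4) (T : Finset V) :
    ∑ y ∈ T, nbrs G K y =
      fib G K T 1 + 2 * fib G K T 2 + 3 * fib G K T 3 + 4 * fib G K T 4 := by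
  have hmaps : ∀ y ∈ T, nbrs G K y ∈ range 5 :=
    fun y _ => mem_range.mpr (by have := nbrs_le G K y; omega)
  rw [← sum_fiberwise_of_maps_to hmaps (nbrs G K)]
  have hc : ∀ i, ∑ y ∈ T.filter (fun y => nbrs G K y = i), nbrs G K y = i * fib G K T i := by
    intro i
    rw [sum_congr rfl (fun y hy => (mem_filter.mp hy).2), sum_const, smul_eq_mul, mul_comm, fib]
  simp [sum_range_succ, hc]

lemma count19 (hG : G.IsSRGWith 75 32 10 16) (K : Finset V) (hK : G.IsNClique 4 K)
    (hb0 : bcount G K 0 = 1) (hb3 : bcount G K 3 = 2) (hb4 : bcount G K 4 = 0)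
    (x0 z w : V) (hx0K : x0 ∉ K) (hx0 : nbrs G K x0 = 0)
    (hzw : z ≠ w) (hzK : z ∉ K) (hz : nbrs G K z = 3) (hwK : w ∉ K) (hw : nbrs G K w = 3)
    (hnadj : ¬ G.Adj z w) (h0z : G.Adj x0 z) :
    ((univ \ K).filter (fun y => nbrs G K y = 1 ∧ G.Adj z y)).card = 19 ∧
    ((univ \ K).filter (fun y => nbrs G K y = 2 ∧ G.Adj z y)).card = 9 := by
  have hK4 : K.card = 4 := hK.2
  have hclique : ∀ a ∈ K, ∀ b ∈ K, a ≠ b → G.Adj a b := fun a ha b hb hab =>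
    hK.1 (Finset.mem_coe.mpr ha) (Finset.mem_coe.mpr hb) hab
  set S : Finset V := (univ \ K).filter (fun y => G.Adj z y) with hS
  -- |S| = 29
  have hdeg : (univ.filter (fun y => G.Adj z y)).card = 32 := by
    have h1 := hG.regular z
    rwa [← SimpleGraph.card_neighborFinset_eq_degree, SimpleGraph.neighborFinset_eq_filter] at h1
  have hScard : S.card = 29 := by
    have h2 := split_card K (fun y => G.Adj z y)
    have h3 : (K.filter (fun y => G.Adj z y)).card = 3 := hz
    rw [hdeg, h3, ← hS] at h2
    omega
  -- goal sets as fibers of S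
  have hgoal : ∀ i, (univ \ K).filter (fun y => nbrs G K y = i ∧ G.Adj z y)
      = S.filter (fun y => nbrs G K y = i) := by
    intro i
    ext y
    simp only [hS, mem_filter, mem_sdiff, mem_univ, true_and]
    tauto
  -- double count : sum of nbrs over S
  have hdouble : ∑ y ∈ S, nbrs G K y = ∑ k ∈ K, (S.filter (fun y => G.Adj y k)).card := by
    have : ∀ y, nbrs G K y = ∑ k ∈ K, if G.Adj y k then 1 else 0 := by
      intro y; rw [nbrs, card_filter]
    rw [sum_congr rfl (fun y _ => this y), sum_comm]
    exact sum_congr rfl (fun k _ => (card_filter _ _).symm)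
  -- evaluate each inner count
  have hfk : ∀ k, S.filter (fun y => G.Adj y k)
      = (univ \ K).filter (fun y => G.Adj z y ∧ G.Adj k y) := by
    intro k
    ext y
    simp only [hS, filter_filter, mem_filter, mem_sdiff, mem_univ, true_and]
    constructor <;> (rintro ⟨h1, h2, h3⟩; exact ⟨h1, h2, h3.symm⟩)
  have hadj_count : ∀ k ∈ K, G.Adj z k → (S.filter (fun y => G.Adj y k)).card = 8 := by
    intro k hkK hzk
    have htot : (univ.filter (fun y => G.Adj z y ∧ G.Adj k y)).card = 10 := by
      rw [common_card]; exact hG.of_adj z k hzk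
    have hin : K.filter (fun y => G.Adj z y ∧ G.Adj k y)
        = (K.filter (fun y => G.Adj z y)).erase k := by
      ext y
      simp only [mem_erase, mem_filter]
      constructor
      · rintro ⟨hyK, hzy, hky⟩
        exact ⟨fun h => G.irrefl (h ▸ hky), hyK, hzy⟩
      · rintro ⟨hne, hyK, hzy⟩
        exact ⟨hyK, hzy, hclique k hkK y hyK (Ne.symm hne)⟩
    have hinc : (K.filter (fun y => G.Adj z y ∧ G.Adj k y)).card = 2 := by
      rw [hin, card_erase_of_mem (s := K.filter (fun y => G.Adj z y)) (mem_filter.mpr ⟨hkK, hzk⟩)]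
      have : (K.filter (fun y => G.Adj z y)).card = 3 := hz
      omega
    have := split_card K (fun y => G.Adj z y ∧ G.Adj k y)
    rw [htot, hinc] at this
    rw [hfk]
    omega
  have hnadj_count : ∀ k ∈ K, ¬ G.Adj z k → (S.filter (fun y => G.Adj y k)).card = 13 := by
    intro k hkK hzk
    have hzk' : z ≠ k := fun h => hzK (h ▸ hkK)
    have htot : (univ.filter (fun y => G.Adj z y ∧ G.Adj k y)).card = 16 := by
      rw [common_card]; exact hG.of_not_adj hzk' hzk
    have hfe : K.filter (fun y => G.Adj z y) = K.erase k := by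
      apply eq_of_subset_of_card_le
      · intro y hy
        rw [mem_filter] at hy
        exact mem_erase.mpr ⟨fun h => hzk (h ▸ hy.2), hy.1⟩
      · rw [card_erase_of_mem hkK]
        have : (K.filter (fun y => G.Adj z y)).card = 3 := hz
        omega
    have hin : K.filter (fun y => G.Adj z y ∧ G.Adj k y) = K.erase k := by
      ext y
      simp only [mem_erase, mem_filter]
      constructor
      · rintro ⟨hyK, hzy, hky⟩
        exact ⟨fun h => G.irrefl (h ▸ hky), hyK⟩
      · rintro ⟨hne, hyK⟩
        have hzy : G.Adj z y := by
          have : y ∈ K.filter (fun y => G.Adj z y) := hfe ▸ mem_erase.mpr ⟨hne, hyK⟩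
          exact (mem_filter.mp this).2
        exact ⟨hyK, hzy, hclique k hkK y hyK (Ne.symm hne)⟩
    have hinc : (K.filter (fun y => G.Adj z y ∧ G.Adj k y)).card = 3 := by
      rw [hin, card_erase_of_mem hkK]; omega
    have := split_card K (fun y => G.Adj z y ∧ G.Adj k y)
    rw [htot, hinc] at this
    rw [hfk]
    omega
  -- total of inner counts = 37
  have hsum37 : ∑ y ∈ S, nbrs G K y = 37 := by
    rw [hdouble, ← sum_filter_add_sum_filter_not K (fun k => G.Adj z k)]
    have h3 : (K.filter (fun k => G.Adj z k)).card = 3 := hz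
    have hcard1 : (K.filter (fun k => ¬ G.Adj z k)).card = 1 := by
      have := card_filter_add_card_filter_not (s := K) (p := fun k => G.Adj z k)
      omega
    rw [sum_congr rfl (fun k hk => hadj_count k (mem_filter.mp hk).1 (mem_filter.mp hk).2),
        sum_congr rfl (fun k hk => hnadj_count k (mem_filter.mp hk).1 (mem_filter.mp hk).2),
        sum_const, sum_const, hcard1, h3]
    norm_num
  -- fiber values
  have hfib0 : fib G K S 0 = 1 := by
    show (S.filter (fun y => nbrs G K y = 0)).card = 1
    have hb0' : ((univ \ K).filter (fun y => nbrs G K y = 0)).card = 1 := hb0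
    have hx0S : x0 ∈ S.filter (fun y => nbrs G K y = 0) := by
      simp only [hS, mem_filter, mem_sdiff, mem_univ, true_and]
      exact ⟨⟨hx0K, h0z.symm⟩, hx0⟩
    have hsub : S.filter (fun y => nbrs G K y = 0) ⊆ (univ \ K).filter (fun y => nbrs G K y = 0) := by
      intro y hy
      simp only [hS, mem_filter, mem_sdiff, mem_univ, true_and] at hy ⊢
      tauto
    have hle := card_le_card hsub
    have hge : 1 ≤ (S.filter (fun y => nbrs G K y = 0)).card := card_pos.mpr ⟨x0, hx0S⟩
    omega
  have hB3 : ({z, w} : Finset V) = (univ \ K).filter (fun y => nbrs G K y = 3) := by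
    apply eq_of_subset_of_card_le
    · intro y hy
      rcases mem_insert.mp hy with h | h
      · subst h; simp only [mem_filter, mem_sdiff, mem_univ, true_and]; exact ⟨hzK, hz⟩
      · rw [mem_singleton] at h; subst h
        simp only [mem_filter, mem_sdiff, mem_univ, true_and]; exact ⟨hwK, hw⟩
    · have hb3' : ((univ \ K).filter (fun y => nbrs G K y = 3)).card = 2 := hb3
      rw [card_insert_of_notMem (by simpa using hzw), card_singleton]
      omega
  have hfib3 : fib G K S 3 = 0 := by
    show (S.filter (fun y => nbrs G K y = 3)).card = 0
    rw [card_eq_zero, eq_empty_iff_forall_notMem]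
    intro y hy
    have hyS := (mem_filter.mp hy).1
    have hy3 := (mem_filter.mp hy).2
    have hadjy : G.Adj z y := (mem_filter.mp hyS).2
    have : y ∈ ({z, w} : Finset V) := by
      rw [hB3]
      simp only [mem_filter, mem_sdiff, mem_univ, true_and]
      exact ⟨(mem_sdiff.mp (mem_filter.mp hyS).1).2, hy3⟩
    rcases mem_insert.mp this with h | h
    · exact G.irrefl (h ▸ hadjy)
    · rw [mem_singleton] at h; exact hnadj (h ▸ hadjy)
  have hfib4 : fib G K S 4 = 0 := by
    have hsub : S.filter (fun y => nbrs G K y = 4) ⊆ (univ \ K).filter (fun y => nbrs G K y = 4) := by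
      intro y hy
      simp only [hS, mem_filter, mem_sdiff, mem_univ, true_and] at hy ⊢
      tauto
    have hb4' : ((univ \ K).filter (fun y => nbrs G K y = 4)).card = 0 := hb4
    have hle := card_le_card hsub
    show (S.filter (fun y => nbrs G K y = 4)).card = 0
    omega
  have h1 := card_fiber_sum G K hK4 S
  have h2 := sum_fiber G K hK4 S
  rw [hsum37] at h2
  rw [hgoal 1, hgoal 2]
  have e1 : (S.filter (fun y => nbrs G K y = 1)).card = fib G K S 1 := rfl
  have e2 : (S.filter (fun y => nbrs G K y = 2)).card = fib G K S 2 := rfl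
  rw [e1, e2]
  omega

end helpers

/-- Case (1,26,42,2): each of the two non-adjacent vertices `x1,x2` with 3
neighbors in the 4-clique `K` (both adjacent to the 0-neighbor vertex `x0`) has
exactly 19 neighbors among the 1-neighbor vertices and 9 among the 2-neighbor
vertices; moreover 12 or 13 of the 1-neighbor vertices are adjacent to both. -/
theorem stmt14 {V : Type*} [Fintype V] [DecidableEq V]
    (G : SimpleGraph V) [DecidableRel G.Adj]
    (hG : G.IsSRGWith 75 32 10 16)
    (K : Finset V) (hK : G.IsNClique 4 K)
    (hb0 : bcount G K 0 = 1) (hb1 : bcount G K 1 = 26)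
    (hb2 : bcount G K 2 = 42) (hb3 : bcount G K 3 = 2) (hb4 : bcount G K 4 = 0)
    (x0 x1 x2 : V) (hx0K : x0 ∉ K) (hx0 : nbrs G K x0 = 0)
    (h12 : x1 ≠ x2) (hx1K : x1 ∉ K) (hx1 : nbrs G K x1 = 3)
    (hx2K : x2 ∉ K) (hx2 : nbrs G K x2 = 3)
    (hnadj : ¬ G.Adj x1 x2) (h01 : G.Adj x0 x1) (h02 : G.Adj x0 x2) :
    (∀ z ∈ ({x1, x2} : Finset V),
      ((univ \ K).filter (fun y => nbrs G K y = 1 ∧ G.Adj z y)).card = 19 ∧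
      ((univ \ K).filter (fun y => nbrs G K y = 2 ∧ G.Adj z y)).card = 9) ∧
    (((univ \ K).filter (fun y => nbrs G K y = 1 ∧ G.Adj x1 y ∧ G.Adj x2 y)).card = 12 ∨
     ((univ \ K).filter (fun y => nbrs G K y = 1 ∧ G.Adj x1 y ∧ G.Adj x2 y)).card = 13) := by
  have hK4 : K.card = 4 := hK.2
  have hc1 := count19 G hG K hK hb0 hb3 hb4 x0 x1 x2 hx0K hx0 h12 hx1K hx1 hx2K hx2 hnadj h01
  have hc2 := count19 G hG K hK hb0 hb3 hb4 x0 x2 x1 hx0K hx0 h12.symm hx2K hx2 hx1K hx1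
    (fun h => hnadj h.symm) h02
  constructor
  · intro z hz
    rcases mem_insert.mp hz with h | h
    · subst h; exact hc1
    · rw [mem_singleton] at h; subst h; exact hc2
  -- part 2
  set T : Finset V := (univ \ K).filter (fun y => G.Adj x1 y ∧ G.Adj x2 y) with hT
  have htot : (univ.filter (fun y => G.Adj x1 y ∧ G.Adj x2 y)).card = 16 := by
    rw [common_card]; exact hG.of_not_adj h12 hnadj
  have hsplit := split_card K (fun y => G.Adj x1 y ∧ G.Adj x2 y)
  rw [htot, ← hT] at hsplit
  -- cK bounds
  have hcK : 2 ≤ (K.filter (fun y => G.Adj x1 y ∧ G.Adj x2 y)).card ∧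
      (K.filter (fun y => G.Adj x1 y ∧ G.Adj x2 y)).card ≤ 3 := by
    have hinter : K.filter (fun y => G.Adj x1 y ∧ G.Adj x2 y)
        = (K.filter (fun y => G.Adj x1 y)) ∩ (K.filter (fun y => G.Adj x2 y)) := by
      ext y; simp only [mem_inter, mem_filter]; tauto
    have h1 : (K.filter (fun y => G.Adj x1 y)).card = 3 := hx1
    have h2 : (K.filter (fun y => G.Adj x2 y)).card = 3 := hx2
    have hiu := card_inter_add_card_union (K.filter (fun y => G.Adj x1 y))
      (K.filter (fun y => G.Adj x2 y))
    have hu : ((K.filter (fun y => G.Adj x1 y)) ∪ (K.filter (fun y => G.Adj x2 y))).card ≤ 4 := by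
      rw [← hK4]
      exact card_le_card (union_subset (filter_subset _ _) (filter_subset _ _))
    have hle2 : ((K.filter (fun y => G.Adj x1 y)) ∩ (K.filter (fun y => G.Adj x2 y))).card ≤ 3 := by
      rw [← h1]
      exact card_le_card inter_subset_left
    rw [hinter]
    omega
  -- fibers of T
  have hfsum := card_fiber_sum G K hK4 T
  have hf0 : fib G K T 0 = 1 := by
    show (T.filter (fun y => nbrs G K y = 0)).card = 1
    have hb0' : ((univ \ K).filter (fun y => nbrs G K y = 0)).card = 1 := hb0
    have hx0T : x0 ∈ T.filter (fun y => nbrs G K y = 0) := by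
      simp only [hT, mem_filter, mem_sdiff, mem_univ, true_and]
      exact ⟨⟨hx0K, h01.symm, h02.symm⟩, hx0⟩
    have hsub : T.filter (fun y => nbrs G K y = 0) ⊆ (univ \ K).filter (fun y => nbrs G K y = 0) := by
      intro y hy
      simp only [hT, mem_filter, mem_sdiff, mem_univ, true_and] at hy ⊢
      tauto
    have hle := card_le_card hsub
    have hge : 1 ≤ (T.filter (fun y => nbrs G K y = 0)).card := card_pos.mpr ⟨x0, hx0T⟩
    omega
  have hB3 : ({x1, x2} : Finset V) = (univ \ K).filter (fun y => nbrs G K y = 3) := by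
    apply eq_of_subset_of_card_le
    · intro y hy
      rcases mem_insert.mp hy with h | h
      · subst h; simp only [mem_filter, mem_sdiff, mem_univ, true_and]; exact ⟨hx1K, hx1⟩
      · rw [mem_singleton] at h; subst h
        simp only [mem_filter, mem_sdiff, mem_univ, true_and]; exact ⟨hx2K, hx2⟩
    · have hb3' : ((univ \ K).filter (fun y => nbrs G K y = 3)).card = 2 := hb3
      rw [card_insert_of_notMem (by simpa using h12), card_singleton]
      omega
  have hf3 : fib G K T 3 = 0 := by
    show (T.filter (fun y => nbrs G K y = 3)).card = 0
    rw [card_eq_zero, eq_empty_iff_forall_notMem]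
    intro y hy
    have hyT := (mem_filter.mp hy).1
    have hy3 := (mem_filter.mp hy).2
    have hadjy : G.Adj x1 y ∧ G.Adj x2 y := (mem_filter.mp hyT).2
    have : y ∈ ({x1, x2} : Finset V) := by
      rw [hB3]
      simp only [mem_filter, mem_sdiff, mem_univ, true_and]
      exact ⟨(mem_sdiff.mp (mem_filter.mp hyT).1).2, hy3⟩
    rcases mem_insert.mp this with h | h
    · exact G.irrefl (h ▸ hadjy.1)
    · rw [mem_singleton] at h; exact hnadj (h ▸ hadjy.1)
  have hf4 : fib G K T 4 = 0 := by
    have hb4' : ((univ \ K).filter (fun y => nbrs G K y = 4)).card = 0 := hb4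
    have hsub : T.filter (fun y => nbrs G K y = 4) ⊆ (univ \ K).filter (fun y => nbrs G K y = 4) := by
      intro y hy
      simp only [hT, mem_filter, mem_sdiff, mem_univ, true_and] at hy ⊢
      tauto
    have hle := card_le_card hsub
    show (T.filter (fun y => nbrs G K y = 4)).card = 0
    omega
  -- identify goal set with fiber 1 of T
  have hgoalset : (univ \ K).filter (fun y => nbrs G K y = 1 ∧ G.Adj x1 y ∧ G.Adj x2 y)
      = T.filter (fun y => nbrs G K y = 1) := by
    ext y
    simp only [hT, mem_filter, mem_sdiff, mem_univ, true_and]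
    tauto
  have ef1 : (T.filter (fun y => nbrs G K y = 1)).card = fib G K T 1 := rfl
  -- lower bound via inclusion exclusion among 1-vertices
  have hlow : 12 ≤ fib G K T 1 := by
    set A : Finset V := (univ \ K).filter (fun y => nbrs G K y = 1 ∧ G.Adj x1 y) with hA
    set B : Finset V := (univ \ K).filter (fun y => nbrs G K y = 1 ∧ G.Adj x2 y) with hB
    have hAc : A.card = 19 := hc1.1
    have hBc : B.card = 19 := hc2.1
    have hABi : A ∩ B = T.filter (fun y => nbrs G K y = 1) := by
      ext y
      simp only [hA, hB, hT, mem_inter, mem_filter, mem_sdiff, mem_univ, true_and]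
      tauto
    have hiu := card_inter_add_card_union A B
    have hUsub : (A ∪ B).card ≤ 26 := by
      have hb1' : ((univ \ K).filter (fun y => nbrs G K y = 1)).card = 26 := hb1
      rw [← hb1']
      apply card_le_card
      apply union_subset
      · intro y hy
        simp only [hA, mem_filter, mem_sdiff, mem_univ, true_and] at hy ⊢
        tauto
      · intro y hy
        simp only [hB, mem_filter, mem_sdiff, mem_univ, true_and] at hy ⊢
        tauto
    rw [hABi, ef1] at hiu
    omega
  rw [hgoalset, ef1]
  omega
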